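/- Under the alignment rotation, the equivariant tensor product with the geometric encoding reduces to a single-index contraction: if R aligns the z-axis with r̂ so that D_R^{(ℓ_f)} R^{(ℓ_f)}(r) = c·e_0 for a scalar c, then (h^{(ℓ_i)} ⊗ R^{(ℓ_f)}(r))^{(ℓ_o)}_{m_o} = [D_{R^{-1}}^{(ℓ_o)} y]_{m_o}, where y_{m_o} = c · Σ_{m_i} C^{(ℓ_o,m_o)}_{(ℓ_i,m_i),(ℓ_f,0)} (D_R^{(ℓ_i)} h)_{m_i}. -/
import Mathlib


open Matrix Finset

/-- Under the alignment rotation, the equivariant (Clebsch–Gordan) tensor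
product with the geometric encoding reduces to a single-index contraction.
Here `tp u v = Σ_{m_i,m_f} C^{(ℓ_o,m_o)}_{(ℓ_i,m_i),(ℓ_f,m_f)} u_{m_i} v_{m_f}`
with Wigner-D matrices `Di, Df, Do` for the aligning rotation `R`, the
intertwining property, pole sparsity `Df (R^{(ℓ_f)}(r)) = c • e₀`, and the
orthogonality `Doᵀ Do = 1` (so `Doᵀ` represents `R⁻¹`). -/
theorem aligned_tensor_product_reduction
    (ℓi ℓf ℓo : ℕ)
    (C : Fin (2 * ℓo + 1) → Fin (2 * ℓi + 1) → Fin (2 * ℓf + 1) → ℝ)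
    (Di : Matrix (Fin (2 * ℓi + 1)) (Fin (2 * ℓi + 1)) ℝ)
    (Df : Matrix (Fin (2 * ℓf + 1)) (Fin (2 * ℓf + 1)) ℝ)
    (Do : Matrix (Fin (2 * ℓo + 1)) (Fin (2 * ℓo + 1)) ℝ)
    (hDo : Doᵀ * Do = 1)
    (tp : (Fin (2 * ℓi + 1) → ℝ) → (Fin (2 * ℓf + 1) → ℝ) → (Fin (2 * ℓo + 1) → ℝ))
    (htp : ∀ u v, tp u v = fun mo => ∑ mi, ∑ mf, C mo mi mf * u mi * v mf)
    (hintertwine : ∀ u v, Do.mulVec (tp u v) = tp (Di.mulVec u) (Df.mulVec v))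
    (h : Fin (2 * ℓi + 1) → ℝ)   -- node features h^{(ℓ_i)}
    (Rf : Fin (2 * ℓf + 1) → ℝ)  -- geometric encoding R^{(ℓ_f)}(r)
    (c : ℝ)
    (hsparse : Df.mulVec Rf = fun mf : Fin (2 * ℓf + 1) => if (mf : ℕ) = ℓf then c else 0) :
    tp h Rf =
      Doᵀ.mulVec (fun mo =>
        c * ∑ mi, C mo mi (⟨ℓf, by omega⟩ : Fin (2 * ℓf + 1)) * (Di.mulVec h) mi) := by
  have key : Do.mulVec (tp h Rf) =
      (fun mo => c * ∑ mi, C mo mi (⟨ℓf, by omega⟩ : Fin (2 * ℓf + 1)) * (Di.mulVec h) mi) := by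
    rw [hintertwine, hsparse, htp]
    funext mo
    rw [Finset.mul_sum]
    refine Finset.sum_congr rfl fun mi _ => ?_
    rw [Finset.sum_eq_single (⟨ℓf, by omega⟩ : Fin (2 * ℓf + 1))]
    · simp; ring
    · intro b _ hb
      have : (b : ℕ) ≠ ℓf := fun hh => hb (Fin.ext hh)
      simp [this]
    · simp
  calc tp h Rf = (Doᵀ * Do).mulVec (tp h Rf) := by rw [hDo, Matrix.one_mulVec]
    _ = Doᵀ.mulVec (Do.mulVec (tp h Rf)) := by rw [Matrix.mulVec_mulVec]
    _ = _ := by rw [key]
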